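/- arXiv:2110.10299 — 2 statements merged into one kernel-verified Lean document; each statement's English description precedes it below -/
import Mathlib

section
/- Let f : ℝⁿ → ℂ be a polynomial with f not constant, and φ ∈ 𝒮(ℝⁿ) a Schwartz function. Then the integral Z_φ(s, f) = ∫_{ℝⁿ \ f⁻¹(0)} φ(x) |f(x)|^s dx converges absolutely for every complex s with Re(s) > 0, and s ↦ Z_φ(s, f) is holomorphic on the half-plane Re(s) > 0. -/
open MeasureTheory

theorem poly_growth (n : ℕ) (f : MvPolynomial (Fin n) ℝ) :
    ∃ C : ℝ, 0 ≤ C ∧ ∀ x : Fin n → ℝ,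
      |MvPolynomial.eval x f| ≤ C * (1 + ‖x‖) ^ f.totalDegree := by
  refine ⟨∑ m ∈ f.support, |f.coeff m|, Finset.sum_nonneg fun _ _ => abs_nonneg _, fun x => ?_⟩
  rw [MvPolynomial.eval_eq, Finset.sum_mul]
  refine (Finset.abs_sum_le_sum_abs _ _).trans (Finset.sum_le_sum fun m hm => ?_)
  rw [abs_mul]
  have h2 : (1:ℝ) ≤ 1 + ‖x‖ := by linarith [norm_nonneg x]
  refine mul_le_mul_of_nonneg_left ?_ (abs_nonneg _)
  calc |∏ i ∈ m.support, x i ^ m i| = ∏ i ∈ m.support, |x i| ^ m i := by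
        rw [Finset.abs_prod]; simp [abs_pow]
    _ ≤ ∏ i ∈ m.support, (1 + ‖x‖) ^ m i := by
        refine Finset.prod_le_prod (fun i _ => by positivity) fun i _ => ?_
        exact pow_le_pow_left₀ (abs_nonneg _)
          ((norm_le_pi_norm x i).trans (by linarith)) _
    _ = (1 + ‖x‖) ^ (∑ i ∈ m.support, m i) := by rw [← Finset.prod_pow_eq_pow_sum]
    _ ≤ (1 + ‖x‖) ^ f.totalDegree :=
        pow_le_pow_right₀ h2 (MvPolynomial.le_totalDegree hm)

theorem aux_integrable (n : ℕ) (f : MvPolynomial (Fin n) ℝ)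
    (φ : SchwartzMap (Fin n → ℝ) ℂ) {r : ℝ} (hr : 0 ≤ r) :
    Integrable (fun x : Fin n → ℝ => ‖φ x‖ * |MvPolynomial.eval x f| ^ r) volume := by
  obtain ⟨C, hC, hCf⟩ := poly_growth n f
  set k : ℕ := ⌈r⌉₊
  set M : ℕ := f.totalDegree * k
  -- dominating function
  have hdom : Integrable (fun x : Fin n → ℝ =>
      ((1 + C) ^ k * 2 ^ M) * (‖φ x‖ + ‖x‖ ^ M * ‖φ x‖)) volume :=
    ((φ.integrable (μ := volume)).norm.add (φ.integrable_pow_mul volume M)).const_mul _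
  refine hdom.mono' ?_ ?_
  · refine AEStronglyMeasurable.mul ?_ ?_
    · exact φ.continuous.norm.aestronglyMeasurable
    · exact (((MvPolynomial.continuous_eval f).abs).rpow_const
        (fun x => Or.inr hr)).aestronglyMeasurable
  · refine Filter.Eventually.of_forall fun x => ?_
    have hx1 : (1:ℝ) ≤ 1 + ‖x‖ := by linarith [norm_nonneg x]
    have ht : |MvPolynomial.eval x f| ^ r ≤ ((1 + C) * (1 + ‖x‖) ^ f.totalDegree) ^ k := by
      have hb : (1:ℝ) ≤ (1 + C) * (1 + ‖x‖) ^ f.totalDegree := by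
        have : (1:ℝ) ≤ (1 + ‖x‖) ^ f.totalDegree := one_le_pow₀ hx1
        nlinarith
      calc |MvPolynomial.eval x f| ^ r
          ≤ ((1 + C) * (1 + ‖x‖) ^ f.totalDegree) ^ r := by
            refine Real.rpow_le_rpow (abs_nonneg _) ?_ hr
            refine (hCf x).trans ?_
            have : (0:ℝ) ≤ (1 + ‖x‖) ^ f.totalDegree := by positivity
            nlinarith
        _ ≤ ((1 + C) * (1 + ‖x‖) ^ f.totalDegree) ^ (k:ℝ) :=
            Real.rpow_le_rpow_of_exponent_le hb (Nat.le_ceil r)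
        _ = ((1 + C) * (1 + ‖x‖) ^ f.totalDegree) ^ k := Real.rpow_natCast _ _
    have hpow : ((1 + C) * (1 + ‖x‖) ^ f.totalDegree) ^ k
        = (1 + C) ^ k * (1 + ‖x‖) ^ M := by
      rw [mul_pow, ← pow_mul]
    have h2M : (1 + ‖x‖) ^ M ≤ 2 ^ M * (1 + ‖x‖ ^ M) := by
      rcases le_total ‖x‖ 1 with h | h
      · have : (1 + ‖x‖) ^ M ≤ 2 ^ M := pow_le_pow_left₀ (by positivity) (by linarith) _
        nlinarith [pow_nonneg (norm_nonneg x) M, pow_pos (by norm_num : (0:ℝ) < 2) M]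
      · have : (1 + ‖x‖) ^ M ≤ (2 * ‖x‖) ^ M := pow_le_pow_left₀ (by positivity) (by linarith) _
        rw [mul_pow] at this
        nlinarith [pow_pos (by norm_num : (0:ℝ) < 2) M]
    rw [norm_mul, norm_norm, Real.norm_eq_abs,
      abs_of_nonneg (Real.rpow_nonneg (abs_nonneg _) _)]
    calc ‖φ x‖ * |MvPolynomial.eval x f| ^ r
        ≤ ‖φ x‖ * ((1 + C) ^ k * (2 ^ M * (1 + ‖x‖ ^ M))) := by
          refine mul_le_mul_of_nonneg_left ?_ (norm_nonneg _)
          refine ht.trans ?_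
          rw [hpow]
          refine mul_le_mul_of_nonneg_left h2M (by positivity)
      _ = ((1 + C) ^ k * 2 ^ M) * (‖φ x‖ + ‖x‖ ^ M * ‖φ x‖) := by ring

theorem rpow_le_rpow_add {t a r b : ℝ} (ht : 0 < t) (har : a ≤ r) (hrb : r ≤ b) :
    t ^ r ≤ t ^ a + t ^ b := by
  rcases le_total t 1 with h | h
  · have : t ^ r ≤ t ^ a := Real.rpow_le_rpow_of_exponent_ge ht h har
    have hb : 0 ≤ t ^ b := Real.rpow_nonneg ht.le _
    linarith
  · have : t ^ r ≤ t ^ b := Real.rpow_le_rpow_of_exponent_le h hrb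
    have ha : 0 ≤ t ^ a := Real.rpow_nonneg (by linarith) _
    linarith

theorem abs_log_le {t ε : ℝ} (ht : 0 < t) (hε : 0 < ε) :
    |Real.log t| ≤ (t ^ (-ε) + t ^ ε) / ε := by
  rcases le_total 1 t with h | h
  · rw [abs_of_nonneg (Real.log_nonneg h)]
    have := Real.log_le_rpow_div ht.le hε
    have hn : 0 ≤ t ^ (-ε) := Real.rpow_nonneg ht.le _
    refine this.trans ?_
    rw [div_le_div_iff₀ hε hε]
    nlinarith
  · rw [abs_of_nonpos (Real.log_nonpos ht.le h)]
    have h2 := Real.log_le_rpow_div (x := t⁻¹) (by positivity) hε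
    rw [Real.log_inv, Real.inv_rpow ht.le, ← Real.rpow_neg ht.le] at h2
    have hp : 0 ≤ t ^ ε := Real.rpow_nonneg ht.le _
    refine h2.trans ?_
    rw [div_le_div_iff₀ hε hε]
    nlinarith

/-- For a nonconstant real polynomial `f` in `n` variables and a Schwartz
function `φ`, the zeta integral `Z_φ(s,f) = ∫_{f ≠ 0} φ(x) |f(x)|^s dx`
converges absolutely for `Re s > 0` and is holomorphic there. -/
theorem stmt_6 (n : ℕ) (f : MvPolynomial (Fin n) ℝ) (hf : 0 < f.totalDegree)
    (φ : SchwartzMap (Fin n → ℝ) ℂ) :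
    (∀ s : ℂ, 0 < s.re →
      IntegrableOn
        (fun x : Fin n → ℝ => φ x * ((|MvPolynomial.eval x f| : ℝ) : ℂ) ^ s)
        {x : Fin n → ℝ | MvPolynomial.eval x f ≠ 0} volume) ∧
    DifferentiableOn ℂ
      (fun s : ℂ =>
        ∫ x in {x : Fin n → ℝ | MvPolynomial.eval x f ≠ 0},
          φ x * ((|MvPolynomial.eval x f| : ℝ) : ℂ) ^ s)
      {s : ℂ | 0 < s.re} := by
  have hale : Continuous fun x : Fin n → ℝ => MvPolynomial.eval x f :=
    MvPolynomial.continuous_eval f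
  set S : Set (Fin n → ℝ) := {x | MvPolynomial.eval x f ≠ 0} with hSdef
  have hSopen : IsOpen S := isOpen_compl_singleton.preimage hale
  have hSmeas : MeasurableSet S := hSopen.measurableSet
  have htpos : ∀ x ∈ S, 0 < |MvPolynomial.eval x f| := fun x hx => abs_pos.mpr hx
  have hbase_cont : Continuous fun x : Fin n → ℝ =>
      ((|MvPolynomial.eval x f| : ℝ) : ℂ) := Complex.continuous_ofReal.comp hale.abs
  have hslit : ∀ x ∈ S, ((|MvPolynomial.eval x f| : ℝ) : ℂ) ∈ Complex.slitPlane := by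
    intro x hx
    exact Complex.mem_slitPlane_iff.mpr (Or.inl (by simpa using htpos x hx))
  have hne : ∀ x ∈ S, ((|MvPolynomial.eval x f| : ℝ) : ℂ) ≠ 0 := by
    intro x hx
    simpa using (htpos x hx).ne'
  -- measurability of F s
  have hFmeas : ∀ s : ℂ, AEStronglyMeasurable
      (fun x : Fin n → ℝ => φ x * ((|MvPolynomial.eval x f| : ℝ) : ℂ) ^ s)
      (volume.restrict S) := by
    intro s
    refine ContinuousOn.aestronglyMeasurable ?_ hSmeas
    exact φ.continuous.continuousOn.mul
      (hbase_cont.continuousOn.cpow continuousOn_const hslit)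
  -- norm identity
  have hnormF : ∀ (s : ℂ), ∀ x ∈ S,
      ‖φ x * ((|MvPolynomial.eval x f| : ℝ) : ℂ) ^ s‖
        = ‖φ x‖ * |MvPolynomial.eval x f| ^ s.re := by
    intro s x hx
    rw [norm_mul,
      Complex.norm_cpow_eq_rpow_re_of_pos (htpos x hx)]
  -- integrability
  have hInt : ∀ s : ℂ, 0 < s.re → IntegrableOn
      (fun x : Fin n → ℝ => φ x * ((|MvPolynomial.eval x f| : ℝ) : ℂ) ^ s) S volume := by
    intro s hs
    refine Integrable.mono' ((aux_integrable n f φ hs.le).restrict) (hFmeas s) ?_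
    filter_upwards [ae_restrict_mem hSmeas] with x hx
    rw [hnormF s x hx]
  refine ⟨hInt, fun s₀ hs₀ => ?_⟩
  have hσ : 0 < s₀.re := hs₀
  set σ := s₀.re with hσdef
  -- the derivative integrand
  set F' : ℂ → (Fin n → ℝ) → ℂ := fun s x =>
    φ x * (((|MvPolynomial.eval x f| : ℝ) : ℂ) ^ s
      * Complex.log ((|MvPolynomial.eval x f| : ℝ) : ℂ)) with hF'def
  have hF'meas : AEStronglyMeasurable (F' s₀) (volume.restrict S) := by
    refine ContinuousOn.aestronglyMeasurable ?_ hSmeas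
    refine φ.continuous.continuousOn.mul
      ((hbase_cont.continuousOn.cpow continuousOn_const hslit).mul ?_)
    exact hbase_cont.continuousOn.clog hslit
  -- bound
  have hbound_int : Integrable (fun x : Fin n → ℝ =>
      (8 / σ) * (‖φ x‖ * |MvPolynomial.eval x f| ^ (σ / 2)
        + ‖φ x‖ * |MvPolynomial.eval x f| ^ (3 * σ / 2))) (volume.restrict S) :=
    ((((aux_integrable n f φ (by linarith : (0:ℝ) ≤ σ / 2)).add
      (aux_integrable n f φ (by linarith : (0:ℝ) ≤ 3 * σ / 2))).const_mul _).restrict)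
  have h_bound : ∀ᵐ x ∂(volume.restrict S), ∀ s ∈ Metric.ball s₀ (σ / 4),
      ‖F' s x‖ ≤ (8 / σ) * (‖φ x‖ * |MvPolynomial.eval x f| ^ (σ / 2)
        + ‖φ x‖ * |MvPolynomial.eval x f| ^ (3 * σ / 2)) := by
    filter_upwards [ae_restrict_mem hSmeas] with x hx s hs
    set t := |MvPolynomial.eval x f| with htdef
    have ht : 0 < t := htpos x hx
    have hre : |s.re - σ| < σ / 4 := by
      have h1 : |(s - s₀).re| ≤ ‖s - s₀‖ := Complex.abs_re_le_norm _
      have h2 : ‖s - s₀‖ < σ / 4 := by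
        simpa [Complex.dist_eq] using hs
      simpa [Complex.sub_re] using h1.trans_lt h2
    have hre1 : σ / 2 ≤ s.re - σ / 4 := by
      have := abs_lt.mp hre; linarith [this.1]
    have hre2 : s.re + σ / 4 ≤ 3 * σ / 2 := by
      have := abs_lt.mp hre; linarith [this.2]
    have hre3 : s.re - σ / 4 ≤ 3 * σ / 2 := by linarith
    have hre4 : σ / 2 ≤ s.re + σ / 4 := by linarith
    have hnorm : ‖F' s x‖ = ‖φ x‖ * (t ^ s.re * |Real.log t|) := by
      rw [hF'def]
      simp only
      rw [norm_mul, norm_mul,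
        Complex.norm_cpow_eq_rpow_re_of_pos ht, ← Complex.ofReal_log ht.le,
        Complex.norm_real, Real.norm_eq_abs]
    rw [hnorm]
    have hlog : |Real.log t| ≤ (t ^ (-(σ/4)) + t ^ (σ/4)) / (σ/4) :=
      abs_log_le ht (by linarith)
    have hchain : t ^ s.re * |Real.log t|
        ≤ (4 / σ) * (t ^ (s.re - σ/4) + t ^ (s.re + σ/4)) := by
      calc t ^ s.re * |Real.log t|
          ≤ t ^ s.re * ((t ^ (-(σ/4)) + t ^ (σ/4)) / (σ/4)) := by
            exact mul_le_mul_of_nonneg_left hlog (Real.rpow_nonneg ht.le _)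
        _ = (4 / σ) * (t ^ (s.re - σ/4) + t ^ (s.re + σ/4)) := by
            rw [show s.re - σ/4 = s.re + -(σ/4) by ring, Real.rpow_add ht,
              Real.rpow_add ht]
            field_simp
    have hsum : t ^ (s.re - σ/4) + t ^ (s.re + σ/4)
        ≤ 2 * (t ^ (σ/2) + t ^ (3 * σ / 2)) := by
      have b1 := rpow_le_rpow_add ht hre1 hre3
      have b2 := rpow_le_rpow_add ht hre4 hre2
      linarith
    calc ‖φ x‖ * (t ^ s.re * |Real.log t|)
        ≤ ‖φ x‖ * ((4 / σ) * (t ^ (s.re - σ/4) + t ^ (s.re + σ/4))) :=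
          mul_le_mul_of_nonneg_left hchain (norm_nonneg _)
      _ ≤ ‖φ x‖ * ((4 / σ) * (2 * (t ^ (σ/2) + t ^ (3 * σ / 2)))) := by
          refine mul_le_mul_of_nonneg_left ?_ (norm_nonneg _)
          refine mul_le_mul_of_nonneg_left hsum (by positivity)
      _ = (8 / σ) * (‖φ x‖ * t ^ (σ/2) + ‖φ x‖ * t ^ (3 * σ / 2)) := by ring
  -- differentiability in s
  have h_diff : ∀ᵐ x ∂(volume.restrict S), ∀ s ∈ Metric.ball s₀ (σ / 4),
      HasDerivAt (fun s' : ℂ => φ x * ((|MvPolynomial.eval x f| : ℝ) : ℂ) ^ s')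
        (F' s x) s := by
    filter_upwards [ae_restrict_mem hSmeas] with x hx s _
    exact ((Complex.hasStrictDerivAt_const_cpow (Or.inl (hne x hx))).hasDerivAt).const_mul (φ x)
  have key := hasDerivAt_integral_of_dominated_loc_of_deriv_le
    (μ := volume.restrict S)
    (F := fun s : ℂ => fun x : Fin n → ℝ =>
      φ x * ((|MvPolynomial.eval x f| : ℝ) : ℂ) ^ s)
    (F' := F') (x₀ := s₀)
    (bound := fun x : Fin n → ℝ =>
      (8 / σ) * (‖φ x‖ * |MvPolynomial.eval x f| ^ (σ / 2)
        + ‖φ x‖ * |MvPolynomial.eval x f| ^ (3 * σ / 2)))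
    (Metric.ball_mem_nhds s₀ (by positivity : (0:ℝ) < σ / 4))
    (Filter.Eventually.of_forall hFmeas)
    (hInt s₀ hσ) hF'meas h_bound hbound_int h_diff
  exact key.2.differentiableAt.differentiableWithinAt
end

section
/- Suppose for each nonconstant real polynomial f there exists a tempered distribution T ∈ 𝒮'(ℝⁿ) with f·T = 1. Then every nonzero differential operator P with constant coefficients on ℝⁿ admits a fundamental solution: there exists S ∈ 𝒮'(ℝⁿ) with P S = δ₀. -/
open MeasureTheory

/-- Partial derivative in coordinate direction `i`. -/
noncomputable def pd {n : ℕ} (i : Fin n) (g : (Fin n → ℝ) → ℂ) : (Fin n → ℝ) → ℂ :=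
  fun x => fderiv ℝ g x (Pi.single i 1)

/-- Iterated partial derivative `∂^k` for a multi-index `k`. -/
noncomputable def pdPow {n : ℕ} (k : Fin n →₀ ℕ) (g : (Fin n → ℝ) → ℂ) :
    (Fin n → ℝ) → ℂ :=
  (List.finRange n).foldr (fun i h => (pd i)^[k i] h) g

open MeasureTheory SchwartzMap Real Complex
open scoped FourierTransform

variable {n : ℕ}

noncomputable def ee (n : ℕ) : EuclideanSpace ℝ (Fin n) ≃L[ℝ] (Fin n → ℝ) :=
  EuclideanSpace.equiv (Fin n) ℝ

noncomputable def pderivCLM (𝕜 : Type*) [RCLike 𝕜] {E F : Type*} [NormedAddCommGroup E]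
    [NormedSpace ℝ E] [NormedAddCommGroup F] [NormedSpace ℝ F] [NormedSpace 𝕜 F]
    [SMulCommClass ℝ 𝕜 F] (m : E) : SchwartzMap E F →L[𝕜] SchwartzMap E F :=
  LineDeriv.lineDerivOpCLM 𝕜 (SchwartzMap E F) m

lemma pderivCLM_apply (𝕜 : Type*) [RCLike 𝕜] {E F : Type*} [NormedAddCommGroup E]
    [NormedSpace ℝ E] [NormedAddCommGroup F] [NormedSpace ℝ F] [NormedSpace 𝕜 F]
    [SMulCommClass ℝ 𝕜 F] (m : E) (f : SchwartzMap E F) (x : E) :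
    pderivCLM 𝕜 m f x = fderiv ℝ f x m := rfl

noncomputable def SchwartzMap.delta (𝕜 F : Type*) [RCLike 𝕜] {E : Type*} [NormedAddCommGroup E]
    [NormedSpace ℝ E] [NormedAddCommGroup F] [NormedSpace ℝ F] [NormedSpace 𝕜 F]
    [SMulCommClass ℝ 𝕜 F] (x : E) : SchwartzMap E F →L[𝕜] F :=
  (BoundedContinuousFunction.evalCLM 𝕜 x).comp (SchwartzMap.toBoundedContinuousFunctionCLM 𝕜 E F)

lemma SchwartzMap.delta_apply (𝕜 F : Type*) [RCLike 𝕜] {E : Type*} [NormedAddCommGroup E]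
    [NormedSpace ℝ E] [NormedAddCommGroup F] [NormedSpace ℝ F] [NormedSpace 𝕜 F]
    [SMulCommClass ℝ 𝕜 F] (x : E) (f : SchwartzMap E F) :
    SchwartzMap.delta 𝕜 F x f = f x := rfl

noncomputable def DW (k : Fin n →₀ ℕ) (g : SchwartzMap (EuclideanSpace ℝ (Fin n)) ℂ) :
    SchwartzMap (EuclideanSpace ℝ (Fin n)) ℂ :=
  (List.finRange n).foldr (fun i h => (pderivCLM ℂ (EuclideanSpace.single i (1:ℝ)))^[k i] h) g

lemma ee_symm_single (i : Fin n) :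
    (ee n).symm (Pi.single i (1:ℝ)) = EuclideanSpace.single i (1:ℝ) := by
  ext j
  simp [ee, EuclideanSpace.single_apply, Pi.single_apply]

lemma pd_comp (i : Fin n) (g : SchwartzMap (EuclideanSpace ℝ (Fin n)) ℂ) :
    pd i (⇑g ∘ ⇑(ee n).symm) = ⇑(pderivCLM ℂ (EuclideanSpace.single i (1:ℝ)) g) ∘ ⇑(ee n).symm := by
  funext x
  simp only [pd, Function.comp_apply, pderivCLM_apply]
  rw [ContinuousLinearEquiv.comp_right_fderiv (iso := (ee n).symm)]
  simp [ee_symm_single]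

lemma pd_iter_comp (i : Fin n) (m : ℕ) (g : SchwartzMap (EuclideanSpace ℝ (Fin n)) ℂ) :
    (pd i)^[m] (⇑g ∘ ⇑(ee n).symm) =
      ⇑((pderivCLM ℂ (EuclideanSpace.single i (1:ℝ)))^[m] g) ∘ ⇑(ee n).symm := by
  induction m generalizing g with
  | zero => simp
  | succ m ih => rw [Function.iterate_succ_apply, pd_comp, ih, Function.iterate_succ_apply]

lemma foldr_comp (k : Fin n →₀ ℕ) (l : List (Fin n)) (g : SchwartzMap (EuclideanSpace ℝ (Fin n)) ℂ) :
    l.foldr (fun i h => (pd i)^[k i] h) (⇑g ∘ ⇑(ee n).symm) =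
      ⇑(l.foldr (fun i h => (pderivCLM ℂ (EuclideanSpace.single i (1:ℝ)))^[k i] h) g)
        ∘ ⇑(ee n).symm := by
  induction l generalizing g with
  | nil => rfl
  | cons a l ih => simp only [List.foldr_cons, ih, pd_iter_comp]

lemma pdPow_comp (k : Fin n →₀ ℕ) (g : SchwartzMap (EuclideanSpace ℝ (Fin n)) ℂ) :
    pdPow k (⇑g ∘ ⇑(ee n).symm) = ⇑(DW k g) ∘ ⇑(ee n).symm :=
  foldr_comp k _ g
variable {n : ℕ}

noncomputable def FW (n : ℕ) : SchwartzMap (EuclideanSpace ℝ (Fin n)) ℂ →L[ℂ]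
    SchwartzMap (EuclideanSpace ℝ (Fin n)) ℂ :=
  ((FourierTransform.fourierCLE ℂ (SchwartzMap (EuclideanSpace ℝ (Fin n)) ℂ)).symm :
    SchwartzMap (EuclideanSpace ℝ (Fin n)) ℂ ≃L[ℂ] _).toContinuousLinearMap

lemma fourier_pderiv (g : SchwartzMap (EuclideanSpace ℝ (Fin n)) ℂ)
    (w ξ : EuclideanSpace ℝ (Fin n)) :
    𝓕 (⇑(pderivCLM ℂ w g)) ξ = (2 * π * Complex.I * (inner ℝ ξ w : ℝ)) * 𝓕 (⇑g) ξ := by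
  have h1 : ⇑(pderivCLM ℂ w g) = fun x => fderiv ℝ g x w := by
    funext x; exact pderivCLM_apply ℂ w g x
  rw [h1]
  have hint : Integrable (fderiv ℝ ⇑g) := (SchwartzMap.fderivCLM ℂ _ _ g).integrable
  rw [← Real.fourier_continuousLinearMap_apply hint,
    Real.fourier_fderiv g.integrable (g.differentiable) hint]
  simp [VectorFourier.fourierSMulRight_apply, innerSL_apply_apply ℝ]
  ring

lemma FW_apply (g : SchwartzMap (EuclideanSpace ℝ (Fin n)) ℂ) (ξ : EuclideanSpace ℝ (Fin n)) :
    FW n g ξ = 𝓕 (⇑g) (-ξ) := by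
  have : FW n g = (FourierTransform.fourierCLE ℂ (SchwartzMap (EuclideanSpace ℝ (Fin n)) ℂ)).symm g := rfl
  rw [this, SchwartzMap.fourierTransformCLE_symm_apply, SchwartzMap.fourierInv_coe]
  exact Real.fourierInv_eq_fourier_neg (⇑g) ξ

lemma FW_pderiv (g : SchwartzMap (EuclideanSpace ℝ (Fin n)) ℂ)
    (w ξ : EuclideanSpace ℝ (Fin n)) :
    FW n (pderivCLM ℂ w g) ξ = (-(2 * π * Complex.I) * (inner ℝ ξ w : ℝ)) * FW n g ξ := by
  rw [FW_apply, FW_apply, fourier_pderiv]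
  have : ((inner ℝ (-ξ) w : ℝ) : ℂ) = -(inner ℝ ξ w : ℝ) := by
    rw [inner_neg_left]; push_cast; ring
  rw [this]; ring

lemma FW_pderiv_iter (w : EuclideanSpace ℝ (Fin n)) (m : ℕ)
    (g : SchwartzMap (EuclideanSpace ℝ (Fin n)) ℂ) (ξ : EuclideanSpace ℝ (Fin n)) :
    FW n ((pderivCLM ℂ w)^[m] g) ξ = (-(2 * π * Complex.I) * (inner ℝ ξ w : ℝ))^m * FW n g ξ := by
  induction m generalizing g with
  | zero => simp
  | succ m ih =>
    rw [Function.iterate_succ_apply, ih, FW_pderiv, pow_succ]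
    ring

lemma FW_foldr (k : Fin n →₀ ℕ) (l : List (Fin n))
    (g : SchwartzMap (EuclideanSpace ℝ (Fin n)) ℂ) (ξ : EuclideanSpace ℝ (Fin n)) :
    FW n (l.foldr (fun i h => (pderivCLM ℂ (EuclideanSpace.single i (1:ℝ)))^[k i] h) g) ξ =
      (l.map fun i => (-(2 * π * Complex.I) * (ξ i : ℂ))^(k i)).prod * FW n g ξ := by
  induction l generalizing g with
  | nil => simp
  | cons a l ih =>
    rw [List.foldr_cons, FW_pderiv_iter, ih, List.map_cons, List.prod_cons]
    have : ((inner ℝ ξ (EuclideanSpace.single a (1:ℝ)) : ℝ) : ℂ) = (ξ a : ℂ) := by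
      rw [EuclideanSpace.inner_single_right]; simp
    rw [this]; ring

lemma FW_DW (k : Fin n →₀ ℕ) (g : SchwartzMap (EuclideanSpace ℝ (Fin n)) ℂ)
    (ξ : EuclideanSpace ℝ (Fin n)) :
    FW n (DW k g) ξ =
      (∏ i : Fin n, (-(2 * π * Complex.I) * (ξ i : ℂ))^(k i)) * FW n g ξ := by
  rw [DW, FW_foldr, Fin.prod_univ_def]

lemma integral_FW (g : SchwartzMap (EuclideanSpace ℝ (Fin n)) ℂ) :
    ∫ x : Fin n → ℝ, (FW n g) ((ee n).symm x) = g 0 := by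
  have h1 : ∫ x : Fin n → ℝ, (FW n g) ((ee n).symm x) =
      ∫ y : EuclideanSpace ℝ (Fin n), (FW n g) y := by
    have hmp := (EuclideanSpace.volume_preserving_symm_measurableEquiv_toLp (Fin n)).symm
    have : ⇑(ee n).symm = ⇑(MeasurableEquiv.toLp 2 (Fin n → ℝ)).symm.symm := rfl
    rw [this]
    exact hmp.integral_comp' (fun y => (FW n g) y)
  rw [h1]
  have h2 : ∫ y : EuclideanSpace ℝ (Fin n), (FW n g) y = 𝓕 (⇑(FW n g)) 0 := by
    rw [Real.fourier_eq]
    simp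
  rw [h2]
  have h3 : 𝓕 (⇑(FW n g)) = ⇑(FourierTransform.fourierCLE ℂ (SchwartzMap (EuclideanSpace ℝ (Fin n)) ℂ) (FW n g)) := by
    rw [SchwartzMap.fourierTransformCLE_apply, SchwartzMap.fourier_coe]
  rw [h3]
  have h4 : FourierTransform.fourierCLE ℂ (SchwartzMap (EuclideanSpace ℝ (Fin n)) ℂ) (FW n g) = g := by
    have : FW n g = (FourierTransform.fourierCLE ℂ (SchwartzMap (EuclideanSpace ℝ (Fin n)) ℂ)).symm g := rfl
    rw [this, ContinuousLinearEquiv.apply_symm_apply]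
  rw [h4]

lemma pdPow_zero_fun (g : (Fin n → ℝ) → ℂ) : pdPow (0 : Fin n →₀ ℕ) g = g := by
  show (List.finRange n).foldr _ g = g
  induction List.finRange n with
  | nil => rfl
  | cons a l ih => simpa using ih

lemma two_pi_I_ne_zero' : (2 * (π:ℂ) * Complex.I) ≠ 0 := by
  simp [Real.pi_ne_zero, Complex.I_ne_zero]



/-- If every nonconstant real polynomial `f` admits a tempered distribution `T`
with `f·T = 1`, then every nonzero constant-coefficient differential operator
`P = Σ_k c_k (2πi)^{-|k|} ∂^k` (with `f = Σ_k c_k x^k`) admits a fundamental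
solution `S` with `P S = δ₀`; here `P S` is computed via the adjoint,
`(P S)(φ) = Σ_k c_k (2πi)^{-|k|} (-1)^{|k|} S(∂^k φ)`. -/
theorem stmt_11 (n : ℕ)
    (hdiv : ∀ f : MvPolynomial (Fin n) ℝ, 0 < f.totalDegree →
      ∃ T : SchwartzMap (Fin n → ℝ) ℂ →L[ℂ] ℂ,
        ∀ φ ψ : SchwartzMap (Fin n → ℝ) ℂ,
          (∀ x, ψ x = (MvPolynomial.eval x f : ℂ) * φ x) → T ψ = ∫ x, φ x)
    (f : MvPolynomial (Fin n) ℝ) (hf : f ≠ 0) :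
    ∃ S : SchwartzMap (Fin n → ℝ) ℂ →L[ℂ] ℂ,
      ∀ (φ : SchwartzMap (Fin n → ℝ) ℂ)
        (ψ : (Fin n →₀ ℕ) → SchwartzMap (Fin n → ℝ) ℂ),
        (∀ k ∈ f.support, ∀ x, ψ k x = pdPow k (fun y => φ y) x) →
        ∑ k ∈ f.support,
          ((MvPolynomial.coeff k f : ℝ) : ℂ) *
              (2 * Real.pi * Complex.I) ^ (-((k.sum fun _ e => e) : ℤ)) *
              (-1 : ℂ) ^ (k.sum fun _ e => e) * S (ψ k) = φ 0 := by
  rcases Nat.eq_zero_or_pos f.totalDegree with hd | hd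
  · -- constant case
    have hsupp : f.support = {0} := by
      rw [Finset.eq_singleton_iff_unique_mem]
      have hall : ∀ k ∈ f.support, k = 0 := by
        intro k hk
        have h1 : (k.sum fun _ e => e) ≤ f.totalDegree := MvPolynomial.le_totalDegree hk
        rw [hd, Nat.le_zero] at h1
        ext i
        by_cases hi : i ∈ k.support
        · exact Finset.sum_eq_zero_iff.mp h1 i hi
        · simpa using Finsupp.notMem_support_iff.mp hi
      obtain ⟨k, hk⟩ := MvPolynomial.support_nonempty.mpr hf
      exact ⟨hall k hk ▸ hk, hall⟩
    have hc0 : MvPolynomial.coeff 0 f ≠ 0 := by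
      have : (0 : Fin n →₀ ℕ) ∈ f.support := by rw [hsupp]; exact Finset.mem_singleton_self 0
      exact MvPolynomial.mem_support_iff.mp this
    have hcC : ((MvPolynomial.coeff 0 f : ℝ) : ℂ) ≠ 0 := by exact_mod_cast hc0
    refine ⟨(((MvPolynomial.coeff 0 f : ℝ) : ℂ)⁻¹) • SchwartzMap.delta ℂ ℂ (0 : Fin n → ℝ),
      fun φ ψ hψ => ?_⟩
    rw [hsupp, Finset.sum_singleton]
    have hψ0 : ψ 0 = φ := by
      ext x
      rw [hψ 0 (by rw [hsupp]; exact Finset.mem_singleton_self 0) x, pdPow_zero_fun]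
    rw [hψ0]
    simp only [Finsupp.sum_zero_index, pow_zero, Nat.cast_zero, neg_zero, zpow_zero,
      ContinuousLinearMap.smul_apply, SchwartzMap.delta_apply, smul_eq_mul, mul_one]
    rw [← mul_assoc, mul_inv_cancel₀ hcC, one_mul]
  · -- main case
    obtain ⟨T, hT⟩ := hdiv f hd
    set toE : SchwartzMap (Fin n → ℝ) ℂ →L[ℂ] SchwartzMap (EuclideanSpace ℝ (Fin n)) ℂ :=
      SchwartzMap.compCLMOfContinuousLinearEquiv ℂ (ee n) with htoE
    set toP : SchwartzMap (EuclideanSpace ℝ (Fin n)) ℂ →L[ℂ] SchwartzMap (Fin n → ℝ) ℂ :=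
      SchwartzMap.compCLMOfContinuousLinearEquiv ℂ (ee n).symm with htoP
    refine ⟨T ∘L toP ∘L FW n ∘L toE, fun φ ψ hψ => ?_⟩
    have hkey : ∀ k ∈ f.support, toE (ψ k) = DW k (toE φ) := by
      intro k hk
      ext y
      have h1 : (toE (ψ k)) y = ψ k ((ee n) y) := rfl
      rw [h1, hψ k hk]
      have h2 : (fun y => φ y) = ⇑(toE φ) ∘ ⇑(ee n).symm := by
        funext x
        show φ x = (toE φ) ((ee n).symm x)
        rw [show (toE φ) ((ee n).symm x) = φ ((ee n) ((ee n).symm x)) from rfl,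
          ContinuousLinearEquiv.apply_symm_apply]
      rw [h2, pdPow_comp]
      show (DW k (toE φ)) ((ee n).symm ((ee n) y)) = (DW k (toE φ)) y
      rw [ContinuousLinearEquiv.symm_apply_apply]
    set base : SchwartzMap (EuclideanSpace ℝ (Fin n)) ℂ := FW n (toE φ) with hbase
    have hsum : ∑ k ∈ f.support,
          ((MvPolynomial.coeff k f : ℝ) : ℂ) *
              (2 * Real.pi * Complex.I) ^ (-((k.sum fun _ e => e) : ℤ)) *
              (-1 : ℂ) ^ (k.sum fun _ e => e) * (T ∘L toP ∘L FW n ∘L toE) (ψ k)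
        = T (∑ k ∈ f.support,
            (((MvPolynomial.coeff k f : ℝ) : ℂ) *
              (2 * Real.pi * Complex.I) ^ (-((k.sum fun _ e => e) : ℤ)) *
              (-1 : ℂ) ^ (k.sum fun _ e => e)) • toP (FW n (DW k (toE φ)))) := by
      rw [map_sum]
      refine Finset.sum_congr rfl fun k hk => ?_
      rw [T.map_smul, smul_eq_mul]
      congr 1
      show T (toP (FW n (toE (ψ k)))) = _
      rw [hkey k hk]
    rw [hsum]
    have hpoint : ∀ x, (∑ k ∈ f.support,
            (((MvPolynomial.coeff k f : ℝ) : ℂ) *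
              (2 * Real.pi * Complex.I) ^ (-((k.sum fun _ e => e) : ℤ)) *
              (-1 : ℂ) ^ (k.sum fun _ e => e)) • toP (FW n (DW k (toE φ)))) x
        = (MvPolynomial.eval x f : ℂ) * (toP base) x := by
      intro x
      rw [← SchwartzMap.delta_apply ℂ ℂ x, map_sum]
      simp only [SchwartzMap.delta_apply]
      have hterm : ∀ k ∈ f.support,
          ((((MvPolynomial.coeff k f : ℝ) : ℂ) *
              (2 * Real.pi * Complex.I) ^ (-((k.sum fun _ e => e) : ℤ)) *
              (-1 : ℂ) ^ (k.sum fun _ e => e)) • toP (FW n (DW k (toE φ)))) x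
          = (((MvPolynomial.coeff k f : ℝ) : ℂ) * ∏ i, ((x i : ℂ)) ^ (k i)) *
              (toP base) x := by
        intro k _
        have h3 : (toP (FW n (DW k (toE φ)))) x = FW n (DW k (toE φ)) ((ee n).symm x) := rfl
        rw [SchwartzMap.smul_apply, h3, FW_DW, smul_eq_mul]
        have h4 : (toP base) x = base ((ee n).symm x) := rfl
        rw [h4]
        have h5 : ∀ i : Fin n, (((ee n).symm x) i : ℝ) = x i := fun i => rfl
        simp only [h5]
        have hsumk : (k.sum fun _ e => e) = ∑ i : Fin n, k i := by
          rw [Finsupp.sum_fintype]; intro i; rfl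
        have h6 : (∏ i : Fin n, (-(2 * (π:ℂ) * Complex.I) * (x i : ℂ)) ^ (k i))
            = (-1 : ℂ) ^ (∑ i : Fin n, k i) * (2 * (π:ℂ) * Complex.I) ^ (∑ i : Fin n, k i) *
              ∏ i : Fin n, (x i : ℂ) ^ (k i) := by
          rw [← Finset.prod_pow_eq_pow_sum, ← Finset.prod_pow_eq_pow_sum,
            ← Finset.prod_mul_distrib, ← Finset.prod_mul_distrib]
          refine Finset.prod_congr rfl fun i _ => ?_
          rw [← mul_pow, ← mul_pow]
          ring_nf
        rw [h6, hsumk]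
        have hz : (2 * (Real.pi:ℂ) * Complex.I) ^ (-(k.sum fun _ e => (e:ℤ)))
            = ((2 * (π:ℂ) * Complex.I) ^ (∑ i : Fin n, k i))⁻¹ := by
          have : (k.sum fun _ e => (e:ℤ)) = ((∑ i : Fin n, k i : ℕ) : ℤ) := by
            rw [Finsupp.sum_fintype _ _ (fun i => by simp), Nat.cast_sum]
          rw [this, zpow_neg, zpow_natCast]
        rw [hz]
        set A : ℂ := (2 * (π:ℂ) * Complex.I) ^ (∑ i : Fin n, k i) with hA
        set Y : ℂ := (-1 : ℂ) ^ (∑ i : Fin n, k i) with hY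
        have hYY : Y * Y = 1 := by
          rw [hY, ← pow_add, ← two_mul, pow_mul]
          norm_num
        have hAA : A⁻¹ * A = 1 :=
          inv_mul_cancel₀ (pow_ne_zero _ two_pi_I_ne_zero')
        have hone : A⁻¹ * Y * (Y * A) = 1 := by
          calc A⁻¹ * Y * (Y * A) = (Y * Y) * (A⁻¹ * A) := by ring
            _ = 1 := by rw [hYY, hAA, one_mul]
        linear_combination (((MvPolynomial.coeff k f : ℝ) : ℂ) *
          (∏ i, ((x i : ℂ)) ^ (k i)) * base ((ee n).symm x)) * hone
      rw [Finset.sum_congr rfl hterm, ← Finset.sum_mul]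
      congr 1
      rw [MvPolynomial.eval_eq']
      push_cast
      rfl
    rw [hT (toP base) _ hpoint]
    have h8 : ∀ x, (toP base) x = FW n (toE φ) ((ee n).symm x) := fun x => rfl
    calc ∫ x, (toP base) x = ∫ x, FW n (toE φ) ((ee n).symm x) := by simp only [h8]
      _ = (toE φ) 0 := integral_FW (toE φ)
      _ = φ 0 := by
          have : (toE φ) 0 = φ ((ee n) 0) := rfl
          rw [this, map_zero]
end
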